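/- Let ℏ ≠ 0, a, b, c, d, t ∈ ℂ with t(t−1) ≠ 0, and m a nonnegative integer. The operator given by t(t−1)·H_VI(Φ) = x(x−1)(x−t)ℏ²Φ'' − ((a+b)(x−1)(x−t) + c x(x−t) + d x(x−1))ℏΦ' + (b+c+d+ℏ)a(x−t)Φ maps polynomials of degree ≤ m into polynomials of degree ≤ m if and only if a = mℏ or b + c + d = (m−1)ℏ. -/

import Mathlib

open Polynomial

/-- The quantized Painlevé VI Hamiltonian acting on polynomials:
`t(t−1)·H_VI Φ = x(x−1)(x−t)(ℏ d/dx)² Φ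
  − ((a+b)(x−1)(x−t) + c x(x−t) + d x(x−1))(ℏ d/dx) Φ
  + (b+c+d+ℏ)a(x−t)·Φ`. -/
noncomputable def HVI (ℏ a b c d t : ℂ) (Φ : ℂ[X]) : ℂ[X] :=
  C (t * (t - 1))⁻¹ *
    (X * (X - 1) * (X - C t) * (ℏ ^ 2 • derivative (derivative Φ))
      - (C (a + b) * (X - 1) * (X - C t) + C c * X * (X - C t)
          + C d * X * (X - 1)) * (ℏ • derivative Φ)
      + C ((b + c + d + ℏ) * a) * (X - C t) * Φ)

lemma HVI_expand (ℏ a b c d t : ℂ) (Φ : ℂ[X]) :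
    HVI ℏ a b c d t Φ = C (t*(t-1))⁻¹ *
      (C (ℏ^2) * (derivative (derivative Φ) * X^3)
       - C (ℏ^2*(t+1)) * (derivative (derivative Φ) * X^2)
       + C (ℏ^2*t) * (derivative (derivative Φ) * X^1)
       - C (ℏ*(a+b+c+d)) * (derivative Φ * X^2)
       + C (ℏ*((a+b)*(t+1)+c*t+d)) * (derivative Φ * X^1)
       - C (ℏ*((a+b)*t)) * derivative Φ
       + C ((b+c+d+ℏ)*a) * (Φ * X^1)
       - C ((b+c+d+ℏ)*a*t) * Φ) := by
  unfold HVI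
  simp only [smul_eq_C_mul, map_add, map_mul, map_pow, map_one]
  ring

lemma coeff_HVI (ℏ a b c d t : ℂ) (m : ℕ) (Φ : ℂ[X]) (hΦ : Φ.degree ≤ m) (n : ℕ)
    (hn : m < n) :
    (HVI ℏ a b c d t Φ).coeff n =
      if n = m + 1 then
        (t*(t-1))⁻¹ * ((a - m*ℏ) * (b+c+d - ((m:ℂ)-1)*ℏ)) * Φ.coeff m
      else 0 := by
  have hc : ∀ j, m < j → Φ.coeff j = 0 := fun j hj =>
    coeff_eq_zero_of_degree_lt (lt_of_le_of_lt hΦ (by exact_mod_cast hj))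
  rw [HVI_expand]
  simp only [coeff_C_mul, coeff_add, coeff_sub, coeff_mul_X_pow', coeff_derivative]
  split_ifs
  all_goals try (exfalso; omega)
  all_goals simp (disch := omega) only [hc]
  all_goals try ring
  · obtain ⟨k, rfl⟩ : ∃ k, m = k + 2 := ⟨m - 2, by omega⟩
    obtain rfl : n = k + 3 := by omega
    norm_num
    push_cast
    ring
  · obtain rfl : m = 1 := by omega
    obtain rfl : n = 2 := by omega
    norm_num
    try ring
  · obtain rfl : m = 0 := by omega
    obtain rfl : n = 1 := by omega
    norm_num

/-- `H_VI` preserves the space of polynomials of degree ≤ m iff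
`a = mℏ` or `b + c + d = (m−1)ℏ`. -/
theorem stmt5 (ℏ a b c d t : ℂ) (hℏ : ℏ ≠ 0) (ht : t * (t - 1) ≠ 0) (m : ℕ) :
    (∀ Φ : ℂ[X], Φ.degree ≤ m → (HVI ℏ a b c d t Φ).degree ≤ m) ↔
      a = m * ℏ ∨ b + c + d = ((m : ℂ) - 1) * ℏ := by
  constructor
  · intro h
    have hd := h (X ^ m) (degree_X_pow m).le
    have h2 : (HVI ℏ a b c d t (X ^ m : ℂ[X])).coeff (m + 1) = 0 := by
      apply coeff_eq_zero_of_degree_lt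
      refine lt_of_le_of_lt hd ?_
      exact_mod_cast Nat.lt_succ_self m
    rw [coeff_HVI ℏ a b c d t m _ (degree_X_pow m).le (m + 1) (Nat.lt_succ_self m),
      if_pos rfl, coeff_X_pow, if_pos rfl, mul_one] at h2
    have hinv : (t * (t - 1))⁻¹ ≠ 0 := inv_ne_zero ht
    have h3 := (mul_eq_zero.mp h2).resolve_left hinv
    rcases mul_eq_zero.mp h3 with h4 | h4
    · exact Or.inl (sub_eq_zero.mp h4)
    · exact Or.inr (sub_eq_zero.mp h4)
  · intro h Φ hΦ
    rw [degree_le_iff_coeff_zero]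
    intro k hk
    have hk' : m < k := by exact_mod_cast hk
    rw [coeff_HVI ℏ a b c d t m Φ hΦ k hk']
    split_ifs with hkm
    · rcases h with h | h <;> simp [h]
    · rfl
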